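/- arXiv:2010.07890 — 3 statements merged into one kernel-verified Lean document; each statement's English description precedes it below -/
import Mathlib

section
/- Let g and h be normalized arithmetic functions with h non-vanishing, and let 1 ≤ m < n be integers. Then A_{n,m}^{g,h} = Σ_{μ ⊢ n−m} 𝓖(μ) · 𝓗(μ, n), where the sum runs over all partitions μ of n − m. -/
open Finset Polynomial

/-- The recursively defined polynomials `P_n^{g,h}` attached to arithmetic functions
`g, h : ℕ → ℝ` (values at `0` are irrelevant): `P_0 = 1` and
`P_n(x) = (x / h(n)) · Σ_{k=1}^n g(k) · P_{n-k}(x)`. -/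
noncomputable def Ppoly (g h : ℕ → ℝ) : ℕ → Polynomial ℝ
  | 0 => 1
  | (n+1) => Polynomial.C (h (n+1))⁻¹ * Polynomial.X *
      ∑ k ∈ Finset.range (n+1), Polynomial.C (g (k+1)) * Ppoly g h (n - k)
  termination_by n => n
  decreasing_by all_goals (simp_wf; try omega)

/-- `A_{n,m}^{g,h}`: the coefficient of `x^m` in `(∏_{k=1}^n h(k)) · P_n^{g,h}(x)`. -/
noncomputable def Acoeff (g h : ℕ → ℝ) (n m : ℕ) : ℝ :=
  (∏ k ∈ Finset.Icc 1 n, h k) * (Ppoly g h n).coeff m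

/-- `h` extended by the convention `h(0) := 0`. -/
noncomputable def hExt (h : ℕ → ℝ) (n : ℕ) : ℝ := if n = 0 then 0 else h n

/-- `h_m(n) = ∏_{k=0}^{m-1} h(n-k)` (with the convention `h(0) := 0`). -/
noncomputable def hIter (h : ℕ → ℝ) (m n : ℕ) : ℝ :=
  ∏ k ∈ Finset.range m, hExt h (n - k)

/-- Helper for `H(μ,n)`: defined on reversed compositions, peeling off the head
(which is the last part `μ_{r+1}` of the original composition). -/
noncomputable def Hrev (h : ℕ → ℝ) : List ℕ → ℕ → ℝ
  | [], _ => 1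
  | (a :: t), n =>
      if n < (a :: t).sum + (a :: t).length then 0
      else ∑ k ∈ Finset.Ico ((a :: t).sum + (a :: t).length - 1) n,
        hIter h a k * Hrev h t (k - a)

/-- `H(μ, n)` for a composition `μ` (a list of positive integers): `H(ε,n) = 1`,
`H(μ,n) = Σ_{k=|μ|+ℓ(μ)-1}^{n-1} h_{μ_{r+1}}(k) · H((μ_1,…,μ_r), k - μ_{r+1})`
if `n ≥ |μ| + ℓ(μ)`, and `0` otherwise. -/
noncomputable def HFun (h : ℕ → ℝ) (μ : List ℕ) (n : ℕ) : ℝ := Hrev h μ.reverse n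

/-- `𝓗(μ, n) = Σ_{λ ∈ Orb(μ)} H(λ, n)`: sum over all distinct rearrangements of `μ`. -/
noncomputable def HCal (h : ℕ → ℝ) (μ : List ℕ) (n : ℕ) : ℝ :=
  ∑ lam ∈ μ.permutations.toFinset, HFun h lam n

/-- `𝓖(μ) = ∏_{k=1}^{ℓ(μ)} g(μ_k + 1)`. -/
noncomputable def GCal (g : ℕ → ℝ) (μ : List ℕ) : ℝ := (μ.map (fun p => g (p + 1))).prod

/-! ### Auxiliary definitions and lemmas -/

/-- The finset of all compositions (lists of positive integers) with sum `N`. -/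
def comps : ℕ → Finset (List ℕ)
  | 0 => {[]}
  | (N+1) => (Finset.range (N+1)).biUnion fun b => (comps (N - b)).image (List.cons (b+1))
  termination_by N => N
  decreasing_by omega

lemma mem_comps : ∀ {N : ℕ} {l : List ℕ}, l ∈ comps N ↔ l.sum = N ∧ ∀ x ∈ l, 0 < x := by
  intro N
  induction N using Nat.strong_induction_on with
  | _ N IH =>
    intro l
    match N with
    | 0 =>
      simp only [comps, Finset.mem_singleton]
      constructor
      · rintro rfl; simp
      · rintro ⟨hs, hp⟩
        cases l with
        | nil => rfl
        | cons a t =>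
          exfalso
          have := hp a (by simp)
          simp at hs; omega
    | (M+1) =>
      rw [comps]
      simp only [Finset.mem_biUnion, Finset.mem_range, Finset.mem_image]
      constructor
      · rintro ⟨b, hb, t, ht, rfl⟩
        rw [IH (M - b) (by omega)] at ht
        obtain ⟨hs, hp⟩ := ht
        constructor
        · simp [hs]; omega
        · intro x hx
          rcases List.mem_cons.mp hx with rfl | hx
          · omega
          · exact hp x hx
      · rintro ⟨hs, hp⟩
        cases l with
        | nil => simp at hs
        | cons a t =>
          have ha : 0 < a := hp a (by simp)
          simp only [List.sum_cons] at hs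
          refine ⟨a - 1, by omega, t, ?_, by congr 1; omega⟩
          rw [IH (M - (a-1)) (by omega)]
          exact ⟨by omega, fun x hx => hp x (List.mem_cons_of_mem _ hx)⟩

lemma hIter_zero_of_lt (h : ℕ → ℝ) {a n : ℕ} (hn : n < a) : hIter h a n = 0 := by
  apply Finset.prod_eq_zero (Finset.mem_range.mpr hn)
  simp [hExt]

lemma Hrev_cons_succ (h : ℕ → ℝ) (a : ℕ) (t : List ℕ) (n : ℕ) :
    Hrev h (a :: t) (n+1) = Hrev h (a :: t) n + hIter h a n * Hrev h t (n - a) := by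
  set T := (a :: t).sum + (a :: t).length with hT
  have hT1 : 1 ≤ T := by simp [hT]; omega
  by_cases hn : n + 1 < T
  · rw [Hrev, if_pos hn, Hrev, if_pos (by omega)]
    by_cases hna : n < a
    · rw [hIter_zero_of_lt h hna]; ring
    · cases t with
      | nil => exfalso; simp [hT] at hn; omega
      | cons b t' =>
        rw [Hrev, if_pos ?_]
        · ring
        · simp only [hT, List.sum_cons, List.length_cons] at hn ⊢; omega
  · rw [Hrev, if_neg hn]
    have hTn : T - 1 ≤ n := by omega
    rw [Finset.sum_Ico_succ_top hTn]
    congr 1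
    by_cases hn2 : n < T
    · have : T - 1 = n := by omega
      rw [Hrev, if_pos hn2, this, Finset.Ico_self, Finset.sum_empty]
    · rw [Hrev, if_neg hn2]

lemma Hrev_zero_of_lt (h : ℕ → ℝ) {a : ℕ} {t : List ℕ} {n : ℕ}
    (hn : n < (a :: t).sum + (a :: t).length) : Hrev h (a :: t) n = 0 := by
  rw [Hrev, if_pos hn]

lemma Ppoly_coeff_succ (g h : ℕ → ℝ) (n m : ℕ) :
    (Ppoly g h (n+1)).coeff (m+1) =
      (h (n+1))⁻¹ * ∑ k ∈ Finset.range (n+1), g (k+1) * (Ppoly g h (n-k)).coeff m := by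
  rw [Ppoly, mul_assoc, Polynomial.coeff_C_mul, Polynomial.coeff_X_mul,
    Polynomial.finset_sum_coeff]
  congr 1
  exact Finset.sum_congr rfl fun k _ => Polynomial.coeff_C_mul _

lemma Ppoly_coeff_zero (g h : ℕ → ℝ) (n : ℕ) : (Ppoly g h (n+1)).coeff 0 = 0 := by
  rw [Ppoly, mul_assoc, Polynomial.coeff_C_mul, Polynomial.mul_coeff_zero,
    Polynomial.coeff_X_zero]
  ring

lemma Ppoly_coeff_eq_zero (g h : ℕ → ℝ) :
    ∀ n m : ℕ, n < m → (Ppoly g h n).coeff m = 0 := by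
  intro n
  induction n using Nat.strong_induction_on with
  | _ n IH =>
    intro m hm
    match n with
    | 0 =>
      rw [Ppoly, Polynomial.coeff_one]
      simp only [ite_eq_right_iff]
      intro h0; omega
    | (N+1) =>
      match m, hm with
      | (m'+1), hm =>
        rw [Ppoly_coeff_succ]
        rw [Finset.sum_eq_zero, mul_zero]
        intro k hk
        rw [IH (N - k) (by omega) m' (by omega), mul_zero]

lemma prod_split (h : ℕ → ℝ) : ∀ (k n : ℕ), k ≤ n →
    ∏ j ∈ Finset.Icc 1 n, h j = (∏ j ∈ Finset.Icc 1 (n-k), h j) * hIter h k n := by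
  intro k
  induction k with
  | zero => intro n _; simp [hIter]
  | succ k IH =>
    intro n hk
    rw [IH n (by omega)]
    have h1 : n - k = (n - (k+1)) + 1 := by omega
    rw [h1, Finset.prod_Icc_succ_top (by omega)]
    rw [hIter, hIter, Finset.prod_range_succ]
    have h2 : n - k = n - (k+1) + 1 := by omega
    have h3 : hExt h (n - k) = h (n - (k+1) + 1) := by
      rw [hExt, if_neg (by omega), h2]
    rw [h3]; ring

lemma Acoeff_succ (g h : ℕ → ℝ) (hnv : ∀ k, 1 ≤ k → h k ≠ 0) (n m : ℕ) :
    Acoeff g h (n+1) (m+1) =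
      ∑ k ∈ Finset.range (n+1), g (k+1) * hIter h k n * Acoeff g h (n-k) m := by
  rw [Acoeff, Ppoly_coeff_succ, Finset.prod_Icc_succ_top (by omega)]
  rw [show (∏ j ∈ Finset.Icc 1 n, h j) * h (n+1) * ((h (n+1))⁻¹ *
      ∑ k ∈ Finset.range (n+1), g (k+1) * (Ppoly g h (n-k)).coeff m) =
    (h (n+1) * (h (n+1))⁻¹) * ((∏ j ∈ Finset.Icc 1 n, h j) *
      ∑ k ∈ Finset.range (n+1), g (k+1) * (Ppoly g h (n-k)).coeff m) from by ring]
  rw [mul_inv_cancel₀ (hnv (n+1) (by omega)), one_mul, Finset.mul_sum]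
  refine Finset.sum_congr rfl fun k hk => ?_
  have hk' : k ≤ n := by have := Finset.mem_range.mp hk; omega
  rw [Acoeff, prod_split h k n hk']
  ring

/-- The generating sum over all compositions of `N`. -/
noncomputable def Fsum (g h : ℕ → ℝ) (N n : ℕ) : ℝ :=
  ∑ l ∈ comps N, GCal g l * Hrev h l n

lemma Fsum_zero (g h : ℕ → ℝ) (n : ℕ) : Fsum g h 0 n = 1 := by
  rw [Fsum]
  rw [show comps 0 = {[]} from by rw [comps]]
  simp [GCal, Hrev]

lemma sum_comps_succ (M : ℕ) (f : List ℕ → ℝ) :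
    ∑ l ∈ comps (M+1), f l =
      ∑ b ∈ Finset.range (M+1), ∑ t ∈ comps (M - b), f ((b+1) :: t) := by
  rw [show comps (M+1) = (Finset.range (M+1)).biUnion
      fun b => (comps (M - b)).image (List.cons (b+1)) from by rw [comps]]
  rw [Finset.sum_biUnion]
  · refine Finset.sum_congr rfl fun b _ => ?_
    rw [Finset.sum_image]
    intro x _ y _ hxy
    exact (List.cons.injEq _ _ _ _ ▸ hxy).2
  · intro b _ c _ hbc
    simp only [Function.onFun, Finset.disjoint_left, Finset.mem_image]
    rintro l ⟨t, _, rfl⟩ ⟨t', _, h'⟩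
    have := (List.cons.injEq _ _ _ _ ▸ h').1
    omega

lemma Fsum_succ (g h : ℕ → ℝ) (N n : ℕ) :
    Fsum g h N (n+1) = Fsum g h N n +
      ∑ b ∈ Finset.range N, g (b+2) * hIter h (b+1) n * Fsum g h (N-(b+1)) (n-(b+1)) := by
  match N with
  | 0 => rw [Fsum_zero, Fsum_zero]; simp
  | (M+1) =>
    rw [Fsum, Fsum, sum_comps_succ, sum_comps_succ]
    rw [← Finset.sum_add_distrib]
    refine Finset.sum_congr rfl fun b hb => ?_
    simp only [Nat.succ_sub_succ] at *
    rw [Fsum, Finset.mul_sum, ← Finset.sum_add_distrib]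
    refine Finset.sum_congr rfl fun t ht => ?_
    rw [Hrev_cons_succ]
    have hG : GCal g ((b+1) :: t) = g (b+2) * GCal g t := by
      rw [GCal, GCal, List.map_cons, List.prod_cons]
    rw [hG]
    ring

lemma Acoeff_eq_Fsum (g h : ℕ → ℝ) (hg : g 1 = 1) (hnv : ∀ k, 1 ≤ k → h k ≠ 0) :
    ∀ n m : ℕ, m ≤ n → Acoeff g h n m = Fsum g h (n-m) n := by
  intro n
  induction n using Nat.strong_induction_on with
  | _ n IH =>
    intro m hm
    match n, m, hm with
    | 0, 0, _ =>
      rw [Acoeff, Fsum_zero]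
      simp [Ppoly]
    | (n+1), 0, _ =>
      rw [Acoeff, Ppoly_coeff_zero, mul_zero]
      rw [Fsum, Finset.sum_eq_zero]
      intro l hl
      obtain ⟨hs, hp⟩ := mem_comps.mp hl
      match l with
      | [] => simp at hs
      | (a :: t) =>
        rw [Hrev_zero_of_lt h (by rw [hs]; simp), mul_zero]
    | (n+1), (m'+1), hm =>
      have hm' : m' ≤ n := by omega
      set N := n - m' with hN
      have hNn : N ≤ n := by omega
      have hNe : n + 1 - (m' + 1) = N := by omega
      rw [Acoeff_succ g h hnv, hNe, Fsum_succ]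
      rw [Finset.sum_range_succ']
      have h0 : g (0+1) * hIter h 0 n * Acoeff g h (n-0) m' = Fsum g h N n := by
        rw [hg, hIter]
        simp only [Finset.range_zero, Finset.prod_empty, Nat.sub_zero, one_mul]
        rw [IH n (by omega) m' hm']
      rw [h0]
      rw [add_comm (∑ k ∈ Finset.range n, _)]
      congr 1
      rw [← Finset.sum_range_add_sum_Ico _ hNn]
      have hzero : ∀ b ∈ Finset.Ico N n,
          g (b+1+1) * hIter h (b+1) n * Acoeff g h (n-(b+1)) m' = 0 := by
        intro b hb
        obtain ⟨hb1, hb2⟩ := Finset.mem_Ico.mp hb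
        rw [Acoeff, Ppoly_coeff_eq_zero g h _ _ (by omega), mul_zero, mul_zero]
      rw [Finset.sum_eq_zero hzero, add_zero]
      refine Finset.sum_congr rfl fun b hb => ?_
      have hbN : b < N := Finset.mem_range.mp hb
      rw [IH (n-(b+1)) (by omega) m' (by omega)]
      have h1 : n - (b+1) - m' = N - (b+1) := by omega
      have h2 : b + 1 + 1 = b + 2 := by omega
      rw [h1, h2]

lemma GCal_perm (g : ℕ → ℝ) {l₁ l₂ : List ℕ} (hp : l₁.Perm l₂) : GCal g l₁ = GCal g l₂ :=
  List.Perm.prod_eq (hp.map _)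

lemma sum_partitions_eq (g h : ℕ → ℝ) (N n : ℕ) :
    ∑ μ : Nat.Partition N, GCal g μ.parts.toList * HCal h μ.parts.toList n =
      Fsum g h N n := by
  have key : ∀ μ : Nat.Partition N,
      GCal g μ.parts.toList * HCal h μ.parts.toList n =
        ∑ lam ∈ μ.parts.toList.permutations.toFinset, GCal g lam * HFun h lam n := by
    intro μ
    rw [HCal, Finset.mul_sum]
    refine Finset.sum_congr rfl fun lam hlam => ?_
    have hp : lam.Perm μ.parts.toList :=
      List.mem_permutations.mp (List.mem_toFinset.mp hlam)
    rw [GCal_perm g hp]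
  simp_rw [key]
  rw [← Finset.sum_biUnion]
  · have hset : Finset.univ.biUnion
        (fun μ : Nat.Partition N => μ.parts.toList.permutations.toFinset) = comps N := by
      ext l
      simp only [Finset.mem_biUnion, Finset.mem_univ, true_and, List.mem_toFinset,
        List.mem_permutations, mem_comps]
      constructor
      · rintro ⟨μ, hp⟩
        constructor
        · rw [hp.sum_eq, Multiset.sum_toList, μ.parts_sum]
        · intro x hx
          exact μ.parts_pos (by rw [← Multiset.mem_toList]; exact hp.subset hx)
      · rintro ⟨hs, hp⟩
        refine ⟨⟨(l : Multiset ℕ), fun {x} hx => hp x (by simpa using hx), by simpa using hs⟩, ?_⟩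
        exact Multiset.coe_eq_coe.mp (by simp [Multiset.coe_toList])
    rw [hset, Fsum]
    -- now reindex by reverse
    refine Finset.sum_nbij' (fun l => l.reverse) (fun l => l.reverse) ?_ ?_ ?_ ?_ ?_
    · intro l hl
      obtain ⟨hs, hp⟩ := mem_comps.mp hl
      exact mem_comps.mpr ⟨by rw [List.sum_reverse, hs],
        fun x hx => hp x (List.mem_reverse.mp hx)⟩
    · intro l hl
      obtain ⟨hs, hp⟩ := mem_comps.mp hl
      exact mem_comps.mpr ⟨by rw [List.sum_reverse, hs],
        fun x hx => hp x (List.mem_reverse.mp hx)⟩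
    · intro l _; exact List.reverse_reverse l
    · intro l _; exact List.reverse_reverse l
    · intro l _
      rw [HFun]
      congr 1
      exact GCal_perm g (List.reverse_perm l).symm
  · intro μ _ ν _ hμν
    simp only [Function.onFun, Finset.disjoint_left, List.mem_toFinset,
      List.mem_permutations]
    intro l hlμ hlν
    apply hμν
    apply Nat.Partition.ext
    have h1 : (↑(μ.parts.toList) : Multiset ℕ) = ↑(ν.parts.toList) :=
      Multiset.coe_eq_coe.mpr ((hlμ.symm).trans hlν)
    rwa [Multiset.coe_toList, Multiset.coe_toList] at h1

/-- Main Theorem: `A_{n,m}^{g,h} = Σ_{μ ⊢ n-m} 𝓖(μ) · 𝓗(μ, n)`. -/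
theorem main_formula_for_coefficients (g h : ℕ → ℝ)
    (hg : g 1 = 1) (hh : h 1 = 1) (hnv : ∀ k, 1 ≤ k → h k ≠ 0)
    (n m : ℕ) (hm1 : 1 ≤ m) (hmn : m < n) :
    Acoeff g h n m =
      ∑ μ : Nat.Partition (n - m), GCal g μ.parts.toList * HCal h μ.parts.toList n := by
  rw [sum_partitions_eq, Acoeff_eq_Fsum g h hg hnv n m (by omega)]
end

section
/- Let h be the arithmetic function h(n) = n for n ≥ 1 (with h(0) := 0). Then for every composition μ and every integer n ≥ 1, H(μ, n) = (∏_{k=0}^{|μ|+ℓ(μ)−1} (n − k)) · ∏_{k=1}^{ℓ(μ)} (k + Σ_{j=1}^{k} μ_j)^{−1}. -/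
open Finset Polynomial

lemma ff_step (d n : ℕ) :
    (∏ j ∈ Finset.range (d+1), (((n:ℝ)+1) - j)) - ∏ j ∈ Finset.range (d+1), ((n:ℝ) - j)
      = ((d:ℝ)+1) * ∏ j ∈ Finset.range d, ((n:ℝ) - j) := by
  have h1 : ∏ j ∈ Finset.range (d+1), (((n:ℝ)+1) - j)
      = ((n:ℝ)+1) * ∏ j ∈ Finset.range d, ((n:ℝ) - j) := by
    rw [Finset.prod_range_succ']
    simp only [Nat.cast_add, Nat.cast_one, Nat.cast_zero, sub_zero]
    rw [mul_comm]
    congr 1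
    apply Finset.prod_congr rfl
    intro j _; push_cast; ring
  rw [h1, Finset.prod_range_succ]
  ring

lemma ff_sum (d m : ℕ) : ∀ n : ℕ, m ≤ n →
    ∑ k ∈ Finset.Ico m n, ∏ j ∈ Finset.range d, ((k:ℝ) - j) =
      ((∏ j ∈ Finset.range (d+1), ((n:ℝ) - j)) - ∏ j ∈ Finset.range (d+1), ((m:ℝ) - j)) / ((d:ℝ)+1) := by
  intro n
  induction n with
  | zero => intro h; interval_cases m; simp
  | succ n ih =>
    intro h
    rcases Nat.lt_or_ge m (n+1) with hm | hm
    · have hm' : m ≤ n := by omega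
      rw [Finset.sum_Ico_succ_top hm', ih hm']
      have hd : ((d:ℝ)+1) ≠ 0 := by positivity
      field_simp
      push_cast
      nlinarith [ff_step d n]
    · have : m = n + 1 := by omega
      subst this
      simp

lemma hIter_id (a k : ℕ) (h : a ≤ k) :
    hIter (fun m => (m:ℝ)) a k = ∏ j ∈ Finset.range a, ((k:ℝ) - j) := by
  unfold hIter hExt
  apply Finset.prod_congr rfl
  intro j hj
  simp only [Finset.mem_range] at hj
  rw [if_neg (by omega)]
  exact Nat.cast_sub (by omega)

lemma aux (L : List ℕ) : ∀ n : ℕ,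
    Hrev (fun m => (m:ℝ)) L n =
      (∏ k ∈ Finset.range (L.sum + L.length), ((n:ℝ) - (k:ℝ))) *
        ∏ k ∈ Finset.Icc 1 L.length, ((k:ℝ) + ((L.reverse.take k).sum : ℝ))⁻¹ := by
  induction L with
  | nil => intro n; simp [Hrev]
  | cons a t ih =>
    intro n
    rw [Hrev]
    simp only [List.sum_cons, List.length_cons]
    by_cases hlt : n < a + t.sum + (t.length + 1)
    · simp only [hlt, ↓reduceIte]
      rw [Finset.prod_eq_zero (Finset.mem_range.mpr (by omega : n < a + t.sum + (t.length + 1)))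
        (by simp), zero_mul]
    · simp only [hlt, ↓reduceIte]
      set d := a + t.sum + t.length with hd
      have hlb : a + t.sum + (t.length + 1) - 1 = d := by omega
      rw [hlb]
      set C : ℝ := ∏ k ∈ Finset.Icc 1 t.length, ((k:ℝ) + ((t.reverse.take k).sum : ℝ))⁻¹ with hC
      have hsummand : ∀ k ∈ Finset.Ico d n,
          hIter (fun m => (m:ℝ)) a k * Hrev (fun m => (m:ℝ)) t (k - a)
            = (∏ j ∈ Finset.range (d+1-1), ((k:ℝ) - j)) * C := by
        intro k hk
        rw [Finset.mem_Ico] at hk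
        have hka : a ≤ k := by omega
        rw [hIter_id a k hka, ih (k - a)]
        rw [← mul_assoc]
        congr 1
        have : d + 1 - 1 = a + (t.sum + t.length) := by omega
        rw [this]
        conv_rhs => rw [Finset.prod_range_add]
        congr 1
        apply Finset.prod_congr rfl
        intro i hi
        simp only [Finset.mem_range] at hi
        rw [Nat.cast_sub hka]
        push_cast
        ring
      rw [Finset.sum_congr rfl hsummand, ← Finset.sum_mul]
      have hdn : d ≤ n := by omega
      rw [show d + 1 - 1 = d from rfl] at *
      rw [ff_sum d d n hdn]
      have hzero : ∏ j ∈ Finset.range (d+1), ((d:ℝ) - j) = 0 :=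
        Finset.prod_eq_zero (Finset.mem_range.mpr (by omega : d < d + 1)) (by simp)
      rw [hzero, sub_zero]
      -- RHS: split Icc 1 (t.length+1)
      rw [Finset.prod_Icc_succ_top (by omega : 1 ≤ t.length + 1)]
      have htake : ∀ k ∈ Finset.Icc 1 t.length,
          ((k:ℝ) + (((a :: t).reverse.take k).sum : ℝ))⁻¹
            = ((k:ℝ) + ((t.reverse.take k).sum : ℝ))⁻¹ := by
        intro k hk
        rw [Finset.mem_Icc] at hk
        rw [List.reverse_cons, List.take_append_of_le_length (by simp; omega)]
      rw [Finset.prod_congr rfl htake, ← hC]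
      have htop : (((a :: t).reverse.take (t.length + 1)).sum : ℝ) = (t.sum : ℝ) + a := by
        rw [List.reverse_cons, List.take_of_length_le (by simp), List.sum_append,
          List.sum_reverse]
        push_cast
        simp
      rw [htop]
      have : d + 1 = a + t.sum + (t.length + 1) := by omega
      rw [← this]
      have hd1 : ((d:ℝ)+1) ≠ 0 := by positivity
      have hc : (((t.length + 1 : ℕ)):ℝ) + ((t.sum:ℝ) + a) = (d:ℝ) + 1 := by
        push_cast [hd]; ring
      rw [hc]
      field_simp

/-- For `h = id`:
`H(μ, n) = ∏_{k=0}^{|μ|+ℓ(μ)-1}(n-k) · ∏_{k=1}^{ℓ(μ)} (k + Σ_{j=1}^k μ_j)⁻¹`. -/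
theorem closed_form_H_h_id (μ : List ℕ) (hpos : ∀ x ∈ μ, 0 < x) (n : ℕ) (hn : 1 ≤ n) :
    HFun (fun k => (k : ℝ)) μ n =
      (∏ k ∈ Finset.range (μ.sum + μ.length), ((n : ℝ) - (k : ℝ))) *
        ∏ k ∈ Finset.Icc 1 μ.length, ((k : ℝ) + ((μ.take k).sum : ℝ))⁻¹ := by
  unfold HFun
  rw [aux μ.reverse n]
  simp [List.sum_reverse, List.length_reverse, List.reverse_reverse]
end

section
/- Let h be a normalized non-vanishing arithmetic function and let id be the arithmetic function id(n) = n. Then for every n ≥ 1, the polynomials P_n = P_n^{id,h} satisfy the three-term recurrence (h(n)/h(n+2)) · P_n(x) + (−2·h(n+1)/h(n+2) − x/h(n+2)) · P_{n+1}(x) + P_{n+2}(x) = 0. -/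
open Finset Polynomial

noncomputable def Ssum (h : ℕ → ℝ) (m : ℕ) : Polynomial ℝ :=
  ∑ k ∈ Finset.range m, Polynomial.C ((k:ℝ)+1) * Ppoly (fun k => (k:ℝ)) h (m - 1 - k)

lemma hP (h : ℕ → ℝ) (m : ℕ) (hne : h (m+1) ≠ 0) :
    Polynomial.C (h (m+1)) * Ppoly (fun k => (k:ℝ)) h (m+1) = Polynomial.X * Ssum h (m+1) := by
  rw [Ppoly, Ssum]
  rw [← mul_assoc, ← mul_assoc, ← Polynomial.C_mul, mul_inv_cancel₀ hne, Polynomial.C_1, one_mul]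
  congr 1
  apply Finset.sum_congr rfl
  intro k hk
  have : m + 1 - 1 - k = m - k := by omega
  rw [this]
  push_cast
  ring_nf

lemma Sdiff (h : ℕ → ℝ) (m : ℕ) :
    Ssum h (m+1) = Ssum h m + ∑ j ∈ Finset.range (m+1), Ppoly (fun k => (k:ℝ)) h j := by
  rw [Ssum, Finset.sum_range_succ', Finset.sum_range_succ]
  have e1 : ∀ k ∈ Finset.range m, Polynomial.C ((((k:ℕ)+1:ℕ):ℝ)+1) * Ppoly (fun k => (k:ℝ)) h (m+1-1-(k+1))
      = Polynomial.C ((k:ℝ)+1) * Ppoly (fun k => (k:ℝ)) h (m-1-k) + Ppoly (fun k => (k:ℝ)) h (m-1-k) := by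
    intro k hk
    have : m + 1 - 1 - (k+1) = m - 1 - k := by omega
    rw [this, show ((((k:ℕ)+1:ℕ):ℝ)+1) = ((k:ℝ)+1)+1 by push_cast; ring,
      Polynomial.C_add, Polynomial.C_1]
    ring
  rw [Finset.sum_congr rfl e1, Finset.sum_add_distrib]
  have e2 : ∑ j ∈ Finset.range m, Ppoly (fun k => (k:ℝ)) h (m-1-j)
      = ∑ j ∈ Finset.range m, Ppoly (fun k => (k:ℝ)) h j :=
    Finset.sum_range_reflect _ m
  rw [e2]
  simp [Ssum, Ppoly]
  ring

lemma key (h : ℕ → ℝ) (hnv : ∀ k, 1 ≤ k → h k ≠ 0) (n : ℕ) (hn : 1 ≤ n) :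
    Polynomial.C (h n) * Ppoly (fun k => (k:ℝ)) h n
      - 2 * Polynomial.C (h (n+1)) * Ppoly (fun k => (k:ℝ)) h (n+1)
      - Polynomial.X * Ppoly (fun k => (k:ℝ)) h (n+1)
      + Polynomial.C (h (n+2)) * Ppoly (fun k => (k:ℝ)) h (n+2) = 0 := by
  obtain ⟨m, rfl⟩ := Nat.exists_eq_add_of_le hn
  have h1 := hP h m (hnv _ (by omega))
  have h2 := hP h (m+1) (hnv _ (by omega))
  have h3 := hP h (m+2) (hnv _ (by omega))
  have d1 := Sdiff h (m+1)
  have d2 := Sdiff h (m+2)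
  have e : (1 + m : ℕ) = m + 1 := by omega
  rw [e] at *
  have hs := Finset.sum_range_succ (fun j => Ppoly (fun k => (k:ℝ)) h j) (m+2)
  rw [show (2 : Polynomial ℝ) * Polynomial.C (h (m+1+1)) = Polynomial.C (h (m+1+1)) + Polynomial.C (h (m+1+1)) from two_mul _]
  linear_combination h1 - 2*h2 + h3 - Polynomial.X * d1 + Polynomial.X * d2 + Polynomial.X * hs

/-- Three-term recurrence for `P_n^{id,h}`:
`(h(n)/h(n+2)) P_n + (-2 h(n+1)/h(n+2) - x/h(n+2)) P_{n+1} + P_{n+2} = 0`. -/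
theorem three_term_recurrence (h : ℕ → ℝ) (hh : h 1 = 1)
    (hnv : ∀ k, 1 ≤ k → h k ≠ 0) (n : ℕ) (hn : 1 ≤ n) :
    Polynomial.C (h n / h (n + 2)) * Ppoly (fun k => (k : ℝ)) h n +
        (Polynomial.C (-2 * h (n + 1) / h (n + 2)) -
            Polynomial.C (h (n + 2))⁻¹ * Polynomial.X) *
          Ppoly (fun k => (k : ℝ)) h (n + 1) +
        Ppoly (fun k => (k : ℝ)) h (n + 2) = 0 := by
  have hne : h (n+2) ≠ 0 := hnv _ (by omega)
  have hk := key h hnv n hn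
  have hcc : Polynomial.C ((h (n+2))⁻¹) * Polynomial.C (h (n+2)) = 1 := by
    rw [← Polynomial.C_mul, inv_mul_cancel₀ hne, Polynomial.C_1]
  simp only [div_eq_mul_inv, neg_mul, map_mul, map_neg, map_ofNat]
  linear_combination Polynomial.C ((h (n+2))⁻¹) * hk - Ppoly (fun k => (k:ℝ)) h (n+2) * hcc
end
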